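/- For any Hermitian matrix A and any positive semidefinite matrix ρ, ‖√ρ A √ρ‖_1 ≤ tr(ρ |A|), where |A| = √(A†A). -/

import Mathlib

open ComplexOrder

/-- The positive semidefinite square root of a positive semidefinite matrix
(as defined in Mathlib of December 2024, since removed). -/
noncomputable def Matrix.PosSemidef.sqrt {n : Type*} [Fintype n] [DecidableEq n]
    {𝕜 : Type*} [RCLike 𝕜] {A : Matrix n n 𝕜} (hA : A.PosSemidef) : Matrix n n 𝕜 :=
  hA.1.eigenvectorUnitary.1 * Matrix.diagonal ((↑) ∘ (√·) ∘ hA.1.eigenvalues) *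
    (star hA.1.eigenvectorUnitary : Matrix n n 𝕜)

namespace Matrix.PosSemidef

lemma sqrt_eq_cfc {n : Type*} [Fintype n] [DecidableEq n]
    {𝕜 : Type*} [RCLike 𝕜] {A : Matrix n n 𝕜} (hA : A.PosSemidef) :
    hA.sqrt = cfc Real.sqrt A := by
  rw [hA.1.cfc_eq, Matrix.IsHermitian.cfc, Unitary.conjStarAlgAut_apply]
  rfl

lemma posSemidef_sqrt {n : Type*} [Fintype n] [DecidableEq n]
    {𝕜 : Type*} [RCLike 𝕜] {A : Matrix n n 𝕜} (hA : A.PosSemidef) : hA.sqrt.PosSemidef := by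
  unfold Matrix.PosSemidef.sqrt
  refine Matrix.PosSemidef.mul_mul_conjTranspose_same ?_ _
  refine Matrix.posSemidef_diagonal_iff.mpr fun i => ?_
  exact RCLike.ofReal_nonneg.mpr (Real.sqrt_nonneg _)

lemma sqrt_mul_self {n : Type*} [Fintype n] [DecidableEq n]
    {𝕜 : Type*} [RCLike 𝕜] {A : Matrix n n 𝕜} (hA : A.PosSemidef) : hA.sqrt * hA.sqrt = A := by
  have hsa : IsSelfAdjoint A := hA.1
  have hspec : ∀ x ∈ spectrum ℝ A, 0 ≤ x := by
    intro x hx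
    obtain ⟨i, rfl⟩ := hA.1.spectrum_real_eq_range_eigenvalues ▸ hx
    exact hA.eigenvalues_nonneg i
  rw [sqrt_eq_cfc, ← cfc_mul Real.sqrt Real.sqrt A]
  conv_rhs => rw [← cfc_id ℝ A]
  refine cfc_congr fun x hx => ?_
  exact Real.mul_self_sqrt (hspec x hx)

lemma eq_sqrt_of_sq_eq {n : Type*} [Fintype n] [DecidableEq n]
    {𝕜 : Type*} [RCLike 𝕜] {A : Matrix n n 𝕜} (hA : A.PosSemidef) (B : Matrix n n 𝕜)
    {hB : B.PosSemidef} (hAB : A ^ 2 = B) : A = hB.sqrt := by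
  have hsa : IsSelfAdjoint A := hA.1
  have hspec : ∀ x ∈ spectrum ℝ A, 0 ≤ x := by
    intro x hx
    obtain ⟨i, rfl⟩ := hA.1.spectrum_real_eq_range_eigenvalues ▸ hx
    exact hA.eigenvalues_nonneg i
  subst hAB
  rw [sqrt_eq_cfc, ← cfc_comp_pow Real.sqrt 2 A]
  conv_lhs => rw [← cfc_id ℝ A]
  refine cfc_congr fun x hx => ?_
  exact (Real.sqrt_sq (hspec x hx)).symm

end Matrix.PosSemidef

/-- The trace norm ‖A‖₁ = tr √(A†A). -/
noncomputable def traceNorm {n : Type*} [Fintype n] [DecidableEq n]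
    (A : Matrix n n ℂ) : ℝ :=
  ((Matrix.posSemidef_conjTranspose_mul_self A).sqrt.trace).re

section Aux

open Matrix

lemma diag_sq_fun' {n : Type*} (c : n → ℝ) :
    (RCLike.ofReal ∘ fun i => (c i)^2 : n → ℂ) = fun i => ((c i : ℂ)) * (c i) := by
  funext i; simp [pow_two]

lemma sqrtAbs' {n : Type*} [Fintype n] [DecidableEq n] {A : Matrix n n ℂ} (hA : A.IsHermitian) :
    (Matrix.posSemidef_conjTranspose_mul_self A).sqrt =
      (hA.eigenvectorUnitary : Matrix n n ℂ) *
        Matrix.diagonal (RCLike.ofReal ∘ fun i => |hA.eigenvalues i|) *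
        star (hA.eigenvectorUnitary : Matrix n n ℂ) := by
  set V := (hA.eigenvectorUnitary : Matrix n n ℂ) with hV
  have hU1 : star V * V = 1 := Unitary.coe_star_mul_self hA.eigenvectorUnitary
  have hPSD : Matrix.PosSemidef
      (V * Matrix.diagonal (RCLike.ofReal ∘ fun i => |hA.eigenvalues i|) * star V) := by
    rw [show star V = Vᴴ from rfl]
    refine Matrix.PosSemidef.mul_mul_conjTranspose_same ?_ V
    refine Matrix.posSemidef_diagonal_iff.mpr fun i => ?_
    exact RCLike.ofReal_nonneg.mpr (abs_nonneg _)
  refine (Matrix.PosSemidef.eq_sqrt_of_sq_eq hPSD _ ?_).symm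
  have hsq : ∀ (c : n → ℝ), (V * Matrix.diagonal (RCLike.ofReal ∘ c) * star V) ^ 2
      = V * Matrix.diagonal (RCLike.ofReal ∘ fun i => (c i)^2) * star V := by
    intro c
    rw [pow_two, diag_sq_fun']
    calc V * Matrix.diagonal (RCLike.ofReal ∘ c) * star V *
          (V * Matrix.diagonal (RCLike.ofReal ∘ c) * star V)
        = V * (Matrix.diagonal (RCLike.ofReal ∘ c) * (star V * V) *
            Matrix.diagonal (RCLike.ofReal ∘ c)) * star V := by
          simp only [Matrix.mul_assoc]
      _ = _ := by rw [hU1, mul_one, Matrix.diagonal_mul_diagonal]; rfl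
  rw [hsq]
  have hAA : Aᴴ * A = V * Matrix.diagonal (RCLike.ofReal ∘ fun i => (hA.eigenvalues i)^2)
      * star V := by
    conv_lhs => rw [hA.eq, hA.spectral_theorem, Unitary.conjStarAlgAut_apply]
    rw [← hV, diag_sq_fun']
    calc V * Matrix.diagonal (RCLike.ofReal ∘ hA.eigenvalues) * star V *
          (V * Matrix.diagonal (RCLike.ofReal ∘ hA.eigenvalues) * star V)
        = V * (Matrix.diagonal (RCLike.ofReal ∘ hA.eigenvalues) * (star V * V) *
            Matrix.diagonal (RCLike.ofReal ∘ hA.eigenvalues)) * star V := by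
          simp only [Matrix.mul_assoc]
      _ = _ := by rw [hU1, mul_one, Matrix.diagonal_mul_diagonal]; rfl
  rw [hAA]
  congr 2
  funext i
  simp [sq_abs]

lemma trace_conj_diag' {n : Type*} [Fintype n] [DecidableEq n] (R V : Matrix n n ℂ) (c : n → ℂ) :
    (R * (V * Matrix.diagonal c * Vᴴ)).trace = ∑ i, (Vᴴ * (R * V)) i i * c i := by
  rw [show R * (V * Matrix.diagonal c * Vᴴ) = ((R * V) * Matrix.diagonal c) * Vᴴ by
        simp only [Matrix.mul_assoc],
      Matrix.trace_mul_comm, show Vᴴ * ((R * V) * Matrix.diagonal c)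
        = (Vᴴ * (R * V)) * Matrix.diagonal c by simp only [Matrix.mul_assoc]]
  simp [Matrix.trace, Matrix.mul_diagonal, Matrix.diag]

lemma entry_diag_conj' {n : Type*} [Fintype n] [DecidableEq n] (M : Matrix n n ℂ) (c : n → ℝ)
    (i : n) :
    (M * Matrix.diagonal (fun j => (c j : ℂ)) * Mᴴ) i i =
      ((∑ j, c j * Complex.normSq (M i j) : ℝ) : ℂ) := by
  push_cast
  rw [Matrix.mul_apply]
  refine Finset.sum_congr rfl fun j _ => ?_
  rw [Matrix.mul_diagonal, Matrix.conjTranspose_apply]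
  rw [mul_comm (M i j) _, mul_assoc]
  congr 1
  exact Complex.mul_conj _

lemma sign_mul_self' (x : ℝ) : Real.sign x * x = |x| := by
  rcases lt_trichotomy x 0 with h|h|h
  · rw [Real.sign_of_neg h, abs_of_neg h]; ring
  · simp [h]
  · rw [Real.sign_of_pos h, abs_of_pos h]; ring

lemma abs_sign_le_one' (x : ℝ) : |Real.sign x| ≤ 1 := by
  rcases lt_trichotomy x 0 with h|h|h
  · simp [Real.sign_of_neg h]
  · simp [h, Real.sign_zero]
  · simp [Real.sign_of_pos h]

end Aux

open Matrix in
/-- For Hermitian A and positive semidefinite ρ, ‖√ρ A √ρ‖₁ ≤ tr(ρ|A|). -/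
theorem stmt12 (d : ℕ) (A ρ : Matrix (Fin d) (Fin d) ℂ)
    (hA : A.IsHermitian) (hρ : ρ.PosSemidef) :
    traceNorm (hρ.sqrt * A * hρ.sqrt) ≤
      ((ρ * (Matrix.posSemidef_conjTranspose_mul_self A).sqrt).trace).re := by
  classical
  set s := hρ.sqrt with hsdef
  have hsH : sᴴ = s := hρ.posSemidef_sqrt.isHermitian
  have hss : s * s = ρ := hρ.sqrt_mul_self
  set X := s * A * s with hXdef
  have hXh : X.IsHermitian := by
    show Xᴴ = X
    rw [hXdef]
    simp only [Matrix.conjTranspose_mul, hsH, hA.eq, Matrix.conjTranspose_conjTranspose]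
    simp only [Matrix.mul_assoc]
  set U := (hXh.eigenvectorUnitary : Matrix (Fin d) (Fin d) ℂ) with hUdef
  set μ := hXh.eigenvalues with hμdef
  set V := (hA.eigenvectorUnitary : Matrix (Fin d) (Fin d) ℂ) with hVdef
  set lam := hA.eigenvalues with hlamdef
  set M := Vᴴ * (s * U) with hMdef
  have hUU : Uᴴ * U = 1 := Unitary.coe_star_mul_self hXh.eigenvectorUnitary
  have hUU' : U * Uᴴ = 1 := Unitary.coe_mul_star_self hXh.eigenvectorUnitary
  set sgn := fun j => Real.sign (μ j) with hsgndef
  set C := U * Matrix.diagonal (fun j => ((sgn j : ℝ) : ℂ)) * Uᴴ with hCdef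
  -- Step 1 : traceNorm X = ∑ |μ i|
  have hTN : traceNorm X = ∑ i, |μ i| := by
    rw [traceNorm, sqrtAbs' hXh, show star (hXh.eigenvectorUnitary : Matrix (Fin d) (Fin d) ℂ)
        = Uᴴ from rfl, ← hUdef, ← hμdef]
    rw [Matrix.trace_mul_comm, show Uᴴ * (U * Matrix.diagonal (RCLike.ofReal ∘ fun i => |μ i|))
        = (Uᴴ * U) * Matrix.diagonal (RCLike.ofReal ∘ fun i => |μ i|) by
          simp only [Matrix.mul_assoc],
      hUU, one_mul, Matrix.trace_diagonal]
    rw [show (∑ i, (RCLike.ofReal ∘ fun i => |μ i|) i : ℂ) = ((∑ i, |μ i| : ℝ) : ℂ) by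
      push_cast; rfl]
    exact Complex.ofReal_re _
  -- Step 2a : tr (C * X) = ∑ |μ i|
  have ha : (C * X).trace = ((∑ i, |μ i| : ℝ) : ℂ) := by
    conv_lhs => rw [show X = U * Matrix.diagonal (RCLike.ofReal ∘ μ) * star U from
      hXh.spectral_theorem]
    rw [show star U = Uᴴ from rfl, trace_conj_diag']
    have hdiag : Uᴴ * (C * U) = Matrix.diagonal (fun j => ((sgn j : ℝ) : ℂ)) := by
      rw [hCdef]
      calc Uᴴ * ((U * Matrix.diagonal (fun j => ((sgn j : ℝ) : ℂ)) * Uᴴ) * U)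
          = (Uᴴ * U) * Matrix.diagonal (fun j => ((sgn j : ℝ) : ℂ)) * (Uᴴ * U) := by
            simp only [Matrix.mul_assoc]
        _ = _ := by rw [hUU, one_mul, mul_one]
    rw [hdiag]
    push_cast
    refine Finset.sum_congr rfl fun i _ => ?_
    rw [Matrix.diagonal_apply_eq]
    rw [show ((RCLike.ofReal ∘ μ) i : ℂ) = ((μ i : ℝ) : ℂ) from rfl]
    rw [← Complex.ofReal_mul, sign_mul_self']
  -- Step 2b : tr (C * X) = ∑ lam i * ∑ sgn j * |M i j|²
  have hb : (C * X).trace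
      = ((∑ i, lam i * ∑ j, sgn j * Complex.normSq (M i j) : ℝ) : ℂ) := by
    have h1 : C * X = ((C * s) * A) * s := by rw [hXdef]; simp only [Matrix.mul_assoc]
    rw [h1, Matrix.trace_mul_comm, show s * ((C * s) * A) = (s * C * s) * A by
      simp only [Matrix.mul_assoc]]
    conv_lhs => rw [show A = V * Matrix.diagonal (RCLike.ofReal ∘ lam) * star V from
      hA.spectral_theorem]
    rw [show star V = Vᴴ from rfl, trace_conj_diag']
    have hMM : Vᴴ * ((s * C * s) * V)
        = M * Matrix.diagonal (fun j => ((sgn j : ℝ) : ℂ)) * Mᴴ := by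
      rw [hCdef, hMdef]
      simp only [Matrix.conjTranspose_mul, Matrix.conjTranspose_conjTranspose, hsH,
        Matrix.mul_assoc]
    rw [hMM]
    push_cast
    refine Finset.sum_congr rfl fun i _ => ?_
    rw [entry_diag_conj']
    rw [show ((RCLike.ofReal ∘ lam) i : ℂ) = ((lam i : ℝ) : ℂ) from rfl]
    push_cast
    ring
  -- Step 3 : RHS = ∑ |lam i| * ∑ |M i j|²
  have hc : ((ρ * (Matrix.posSemidef_conjTranspose_mul_self A).sqrt).trace).re
      = ∑ i, |lam i| * ∑ j, Complex.normSq (M i j) := by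
    rw [sqrtAbs' hA, show star (hA.eigenvectorUnitary : Matrix (Fin d) (Fin d) ℂ) = Vᴴ from rfl,
      ← hVdef, ← hlamdef, trace_conj_diag']
    have hVρ : Vᴴ * (ρ * V) = M * Matrix.diagonal (fun _ : Fin d => ((1 : ℝ) : ℂ)) * Mᴴ := by
      rw [show Matrix.diagonal (fun _ : Fin d => ((1 : ℝ) : ℂ)) = 1 by
        rw [show (fun _ : Fin d => ((1 : ℝ) : ℂ)) = fun _ : Fin d => (1 : ℂ) by
          funext _; norm_num]; exact Matrix.diagonal_one]
      rw [Matrix.mul_one, hMdef]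
      simp only [Matrix.conjTranspose_mul, Matrix.conjTranspose_conjTranspose, hsH,
        Matrix.mul_assoc]
      rw [show U * (Uᴴ * (s * V)) = (U * Uᴴ) * (s * V) by simp only [Matrix.mul_assoc], hUU',
        one_mul, show s * (s * V) = (s * s) * V by simp only [Matrix.mul_assoc], hss]
    rw [hVρ]
    rw [show (∑ i, (M * Matrix.diagonal (fun _ : Fin d => ((1 : ℝ) : ℂ)) * Mᴴ) i i
          * (RCLike.ofReal ∘ fun i => |lam i|) i : ℂ)
        = ((∑ i, |lam i| * ∑ j, Complex.normSq (M i j) : ℝ) : ℂ) from ?_]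
    · exact Complex.ofReal_re _
    calc ∑ i, ((M * Matrix.diagonal (fun _ : Fin d => ((1 : ℝ) : ℂ)) * Mᴴ) i i
          * (RCLike.ofReal ∘ fun i => |lam i|) i)
        = ∑ i, (((|lam i| * ∑ j, Complex.normSq (M i j) : ℝ)) : ℂ) := by
          refine Finset.sum_congr rfl fun i _ => ?_
          rw [entry_diag_conj']
          rw [show ((RCLike.ofReal ∘ fun i => |lam i|) i : ℂ) = ((|lam i| : ℝ) : ℂ) from rfl]
          push_cast
          ring
      _ = _ := by push_cast; rfl
  -- Combine
  have key : (∑ i, |μ i|) = ∑ i, lam i * ∑ j, sgn j * Complex.normSq (M i j) :=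
    Complex.ofReal_injective (ha.symm.trans hb)
  rw [hTN, hc, key]
  refine Finset.sum_le_sum fun i _ => ?_
  calc lam i * ∑ j, sgn j * Complex.normSq (M i j)
      ≤ |lam i * ∑ j, sgn j * Complex.normSq (M i j)| := le_abs_self _
    _ = |lam i| * |∑ j, sgn j * Complex.normSq (M i j)| := abs_mul _ _
    _ ≤ |lam i| * ∑ j, Complex.normSq (M i j) := by
        refine mul_le_mul_of_nonneg_left ?_ (abs_nonneg _)
        refine (Finset.abs_sum_le_sum_abs _ _).trans (Finset.sum_le_sum fun j _ => ?_)
        rw [abs_mul, abs_of_nonneg (Complex.normSq_nonneg _)]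
        exact mul_le_of_le_one_left (Complex.normSq_nonneg _) (abs_sign_le_one' _)
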